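/- Let A be an m×n real matrix, x ∈ ℝⁿ, K ⊆ {1,...,n} with complement K̄, and C > 1. Suppose for every w in the null space of A we have ‖x_K + w_K‖₁ + (1/C)‖w_{K̄}‖₁ ≥ ‖x_K‖₁. Then any minimizer x̂ of ‖z‖₁ subject to Az = Ax satisfies ‖(x − x̂)_{K̄}‖₁ ≤ (2C/(C−1))‖x_{K̄}‖₁. -/

import Mathlib

noncomputable def l1 {n : ℕ} (x : Fin n → ℝ) : ℝ := ∑ i, |x i|

def restr {n : ℕ} (x : Fin n → ℝ) (S : Finset (Fin n)) : Fin n → ℝ :=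
  fun i => if i ∈ S then x i else 0

lemma l1_split {n : ℕ} (v : Fin n → ℝ) (S : Finset (Fin n)) :
    l1 v = l1 (restr v S) + l1 (restr v Sᶜ) := by
  unfold l1
  rw [← Finset.sum_add_distrib]
  apply Finset.sum_congr rfl
  intro i _
  by_cases h : i ∈ S <;> simp [restr, h]

lemma l1_neg {n : ℕ} (v : Fin n → ℝ) : l1 (-v) = l1 v := by
  unfold l1; simp

lemma restr_neg {n : ℕ} (v : Fin n → ℝ) (S : Finset (Fin n)) :
    restr (-v) S = -(restr v S) := by
  funext i; by_cases h : i ∈ S <;> simp [restr, h]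

lemma restr_add {n : ℕ} (a b : Fin n → ℝ) (S : Finset (Fin n)) :
    restr (a + b) S = restr a S + restr b S := by
  funext i; by_cases h : i ∈ S <;> simp [restr, h]

lemma l1_add_le {n : ℕ} (a b : Fin n → ℝ) : l1 (a + b) ≤ l1 a + l1 b := by
  unfold l1
  rw [← Finset.sum_add_distrib]
  exact Finset.sum_le_sum fun i _ => abs_add_le _ _

lemma l1_sub_le {n : ℕ} (a b : Fin n → ℝ) : l1 a - l1 b ≤ l1 (a + b) := by
  have := l1_add_le (a + b) (-b)
  simp only [add_neg_cancel_right, l1_neg] at this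
  linarith

theorem stmt_1 {m n : ℕ} (A : Matrix (Fin m) (Fin n) ℝ) (x : Fin n → ℝ)
    (K : Finset (Fin n)) (C : ℝ) (hC : 1 < C)
    (hns : ∀ w : Fin n → ℝ, A.mulVec w = 0 →
      l1 (restr x K + restr w K) + (1 / C) * l1 (restr w Kᶜ) ≥ l1 (restr x K))
    (xhat : Fin n → ℝ) (hfeas : A.mulVec xhat = A.mulVec x)
    (hmin : ∀ z : Fin n → ℝ, A.mulVec z = A.mulVec x → l1 xhat ≤ l1 z) :
    l1 (restr (x - xhat) Kᶜ) ≤ (2 * C / (C - 1)) * l1 (restr x Kᶜ) := by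
  set w : Fin n → ℝ := xhat - x with hw
  have hAw : A.mulVec w = 0 := by
    rw [hw, Matrix.mulVec_sub, hfeas, sub_self]
  have hns' := hns w hAw
  have hle : l1 xhat ≤ l1 x := hmin x rfl
  have hx : l1 x = l1 (restr x K) + l1 (restr x Kᶜ) := l1_split x K
  have hxh : l1 xhat = l1 (restr xhat K) + l1 (restr xhat Kᶜ) := l1_split xhat K
  have hxw : xhat = x + w := by rw [hw]; ring
  have h1 : l1 (restr xhat K) = l1 (restr x K + restr w K) := by
    rw [hxw, restr_add]
  have h2 : l1 (restr w Kᶜ) - l1 (restr x Kᶜ) ≤ l1 (restr xhat Kᶜ) := by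
    have := l1_sub_le (restr w Kᶜ) (restr x Kᶜ)
    rw [hxw, restr_add, add_comm (restr x Kᶜ)]
    exact this
  have hxsub : restr (x - xhat) Kᶜ = -(restr w Kᶜ) := by
    rw [← restr_neg]; congr 1; rw [hw]; ring
  rw [hxsub, l1_neg]
  have hC0 : (0:ℝ) < C := by linarith
  have key : l1 (restr x K) - (1/C) * l1 (restr w Kᶜ) + (l1 (restr w Kᶜ) - l1 (restr x Kᶜ)) ≤ l1 (restr x K) + l1 (restr x Kᶜ) := by
    rw [hx] at hle
    rw [hxh, h1] at hle
    have := h2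
    linarith
  have h3 : (1 - 1/C) * l1 (restr w Kᶜ) ≤ 2 * l1 (restr x Kᶜ) := by linarith
  rw [div_mul_eq_mul_div, le_div_iff₀ (by linarith)]
  have h4 : C * ((1 - 1/C) * l1 (restr w Kᶜ)) ≤ C * (2 * l1 (restr x Kᶜ)) :=
    mul_le_mul_of_nonneg_left h3 hC0.le
  have h5 : C * ((1 - 1/C) * l1 (restr w Kᶜ)) = l1 (restr w Kᶜ) * (C - 1) := by
    field_simp
  linarith
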